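/- Let n ≥ 2 and k ≥ 2 be integers and let A_V be the real nk × nk matrix with rows and columns indexed by (ℤ/nℤ) × {1, …, k} whose entries are: (A_V)_{(i,j),(i',j')} = k if i = i' and j ≠ j'; (A_V)_{(i,j),(i',j')} = [i' = i + 1 (mod n)] + [i' = i − 1 (mod n)] if i ≠ i'; and (A_V)_{(i,j),(i,j)} = 0 (here [P] is 1 if P holds and 0 otherwise). Then the characteristic polynomial of A_V equals (X + k)^{n(k−1)} · ∏_{j=0}^{n−1} ( X − (k² − k + 2k·cos(2πj/n)) ). Equivalently, the eigenvalues of A_V are k² + 2k·cos(2πj/n) − k for j = 0, …, n−1, together with −k with multiplicity n(k−1). -/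

import Mathlib

open Polynomial

open Matrix Kronecker

namespace AVaux

noncomputable def ee (n : ℕ) (m : ℤ) : ℂ := Complex.exp (2 * Real.pi * Complex.I * m / n)

variable {n : ℕ}

lemma ee_zero (n : ℕ) : ee n 0 = 1 := by simp [ee]

lemma ee_add [NeZero n] (a b : ℤ) : ee n (a + b) = ee n a * ee n b := by
  have hn : (n : ℂ) ≠ 0 := Nat.cast_ne_zero.mpr (NeZero.ne n)
  rw [ee, ee, ee, ← Complex.exp_add]
  congr 1
  field_simp
  push_cast
  ring

lemma ee_congr [NeZero n] {a b : ℤ} (h : a ≡ b [ZMOD n]) : ee n a = ee n b := by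
  have hn : (n : ℂ) ≠ 0 := Nat.cast_ne_zero.mpr (NeZero.ne n)
  obtain ⟨c, hc⟩ := h.dvd
  have hb : b = a + n * c := by linarith [hc]
  subst hb
  rw [ee, ee]
  have h2 : ((a + (n:ℤ) * c : ℤ) : ℂ) = (a : ℂ) + n * c := by push_cast; ring
  rw [h2]
  have : 2 * (Real.pi : ℂ) * Complex.I * ((a : ℂ) + n * c) / n
      = 2 * Real.pi * Complex.I * a / n + c * (2 * Real.pi * Complex.I) := by
    field_simp
  rw [this, Complex.exp_add, Complex.exp_int_mul_two_pi_mul_I, mul_one]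

lemma ee_nat_mul [NeZero n] (a : ℕ) (b : ℤ) : ee n (a * b) = ee n b ^ a := by
  rw [ee, ee, ← Complex.exp_nat_mul]
  congr 1
  push_cast
  ring

lemma ee_pow_n [NeZero n] (b : ℤ) : ee n b ^ n = 1 := by
  rw [← ee_nat_mul]
  refine (ee_congr ?_).trans (ee_zero n)
  simp [Int.ModEq, Int.mul_emod_right]

lemma ee_two_cos [NeZero n] (t : ℤ) :
    ee n t + ee n (-t) = 2 * Complex.cos (2 * Real.pi * t / n) := by
  have h1 : (2 * Real.pi * (t:ℂ) / n) * Complex.I = 2 * Real.pi * Complex.I * t / n := by ring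
  have h2 : -(2 * Real.pi * (t:ℂ) / n) * Complex.I = 2 * Real.pi * Complex.I * ((-t : ℤ) : ℂ) / n := by
    push_cast; ring
  rw [Complex.two_cos, h1, h2, ee, ee]

end AVaux
namespace AVaux2
open AVaux

variable (n k : ℕ)

noncomputable def Fm : Matrix (ZMod n) (ZMod n) ℂ :=
  Matrix.of fun i i' => ee n ((i.val : ℤ) * i'.val)

noncomputable def Fm' : Matrix (ZMod n) (ZMod n) ℂ :=
  Matrix.of fun i i' => (n : ℂ)⁻¹ * ee n (-((i.val : ℤ) * i'.val))

def Qm [NeZero k] : Matrix (Fin k) (Fin k) ℂ :=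
  Matrix.of fun j j' =>
    if j' = 0 then 1 else (if j = 0 then 1 else 0) - (if j = j' then 1 else 0)

noncomputable def Qm' [NeZero k] : Matrix (Fin k) (Fin k) ℂ :=
  Matrix.of fun j j' => (k : ℂ)⁻¹ - (if j' = 0 then 0 else if j = j' then 1 else 0)

def Cm : Matrix (ZMod n) (ZMod n) ℂ :=
  Matrix.of fun i i' => (if i' = i + 1 then (1 : ℂ) else 0) + (if i' = i - 1 then 1 else 0)

def Jm : Matrix (Fin k) (Fin k) ℂ := Matrix.of fun _ _ => 1

noncomputable def lam : ZMod n → ℂ := fun i => ee n i.val + ee n (-(i.val : ℤ))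

def em [NeZero k] : Fin k → ℂ := fun j => if j = 0 then (k : ℂ) else 0

variable {n k}

lemma val_intCast [NeZero n] (a : ZMod n) : (((a.val : ℤ) : ZMod n)) = a := by
  push_cast
  simp [ZMod.natCast_val, ZMod.cast_id]

lemma zmod_sum [NeZero n] {M : Type*} [AddCommMonoid M] (f : ℕ → M) :
    ∑ i : ZMod n, f i.val = ∑ v ∈ Finset.range n, f v := by
  rw [← Fin.sum_univ_eq_sum_range]
  apply Fintype.sum_bijective (fun i : ZMod n => (⟨i.val, ZMod.val_lt i⟩ : Fin n))
  · rw [Fintype.bijective_iff_injective_and_card]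
    refine ⟨fun a b hab => ?_, by simp [ZMod.card]⟩
    have := congrArg Fin.val hab
    simpa using ZMod.val_injective n this
  · intro i; rfl

lemma zmod_prod [NeZero n] {M : Type*} [CommMonoid M] (f : ℕ → M) :
    ∏ i : ZMod n, f i.val = ∏ v ∈ Finset.range n, f v := by
  rw [← Fin.prod_univ_eq_prod_range]
  apply Fintype.prod_bijective (fun i : ZMod n => (⟨i.val, ZMod.val_lt i⟩ : Fin n))
  · rw [Fintype.bijective_iff_injective_and_card]
    refine ⟨fun a b hab => ?_, by simp [ZMod.card]⟩
    have := congrArg Fin.val hab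
    simpa using ZMod.val_injective n this
  · intro i; rfl

lemma lam_eq [NeZero n] (i : ZMod n) :
    lam n i = 2 * Complex.cos (2 * Real.pi * (i.val : ℂ) / n) := by
  rw [lam, ee_two_cos]
  norm_num

lemma CF_eq [NeZero n] : Cm n * Fm n = Fm n * Matrix.diagonal (lam n) := by
  ext i t
  rw [Matrix.mul_diagonal]
  rw [Matrix.mul_apply]
  simp only [Cm, Fm, Matrix.of_apply, add_mul, ite_mul, one_mul, zero_mul,
    Finset.sum_add_distrib, Finset.sum_ite_eq', Finset.mem_univ, if_true]
  rw [lam, mul_add, ← ee_add, ← ee_add]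
  congr 1
  · apply ee_congr
    rw [← ZMod.intCast_eq_intCast_iff]
    push_cast
    simp [ZMod.natCast_val, ZMod.cast_id]
    ring
  · apply ee_congr
    rw [← ZMod.intCast_eq_intCast_iff]
    push_cast
    simp [ZMod.natCast_val, ZMod.cast_id]
    ring


lemma em_zero [NeZero k] : em k 0 = (k : ℂ) := by simp [em]

lemma em_ne [NeZero k] {j : Fin k} (hj : j ≠ 0) : em k j = 0 := by simp [em, hj]

lemma JQ_eq [NeZero k] : Jm k * Qm k = Qm k * Matrix.diagonal (em k) := by
  ext j j'
  rw [Matrix.mul_diagonal, Matrix.mul_apply]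
  simp only [Jm, Qm, em, Matrix.of_apply, one_mul]
  by_cases h : j' = 0
  · subst h
    simp [Finset.card_univ]
  · simp only [h, if_false, mul_zero]
    rw [Finset.sum_sub_distrib]
    simp [h]

lemma FF'_eq [NeZero n] : Fm n * Fm' n = 1 := by
  have hn : (n : ℂ) ≠ 0 := Nat.cast_ne_zero.mpr (NeZero.ne n)
  ext i t
  rw [Matrix.mul_apply]
  simp only [Fm, Fm', Matrix.of_apply]
  have key : ∀ m : ZMod n,
      ee n ((i.val : ℤ) * m.val) * ((n : ℂ)⁻¹ * ee n (-((m.val : ℤ) * t.val)))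
        = (n : ℂ)⁻¹ * ee n ((i.val : ℤ) - t.val) ^ m.val := by
    intro m
    rw [← ee_nat_mul,
      show ((m.val : ℤ) * ((i.val : ℤ) - t.val)) = (i.val : ℤ) * m.val + -((m.val : ℤ) * t.val)
        by ring, ee_add]
    ring
  rw [Finset.sum_congr rfl fun m _ => key m, ← Finset.mul_sum]
  rw [zmod_sum (fun v => ee n ((i.val : ℤ) - t.val) ^ v)]
  by_cases h : i = t
  · subst h
    simp only [sub_self, ee_zero, one_pow, Finset.sum_const, Finset.card_range, nsmul_eq_mul,
      mul_one]
    rw [inv_mul_cancel₀ hn]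
    simp [Matrix.one_apply]
  · have hz : ee n ((i.val : ℤ) - t.val) ≠ 1 := by
      intro hcontra
      rw [ee, Complex.exp_eq_one_iff] at hcontra
      obtain ⟨m, hm⟩ := hcontra
      have hI : (2 : ℂ) * Real.pi * Complex.I ≠ 0 := by
        simp [Real.pi_ne_zero, Complex.I_ne_zero, Complex.ofReal_ne_zero]
      have h1 : (2 : ℂ) * Real.pi * Complex.I * ((((i.val : ℤ) - t.val : ℤ)) : ℂ)
          = 2 * Real.pi * Complex.I * ((m : ℂ) * n) := by
        have h0 := congrArg (fun z : ℂ => z * (n : ℂ)) hm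
        simp only [div_mul_cancel₀ _ hn] at h0
        rw [h0]; ring
      have hd : ((((i.val : ℤ) - t.val : ℤ)) : ℂ) = (m : ℂ) * n := mul_left_cancel₀ hI h1
      have hdZ : (i.val : ℤ) - t.val = m * n := by exact_mod_cast hd
      have hzero : (i.val : ℤ) - t.val = 0 := by
        refine Int.eq_zero_of_abs_lt_dvd ⟨m, by rw [hdZ, mul_comm]⟩ ?_
        have h2 := ZMod.val_lt i
        have h3 := ZMod.val_lt t
        rw [abs_lt]
        omega
      exact h (ZMod.val_injective n (by omega))
    rw [geom_sum_eq hz n]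
    rw [ee_pow_n]
    simp [Matrix.one_apply, h]


lemma QQ'_eq [NeZero k] (hk : k ≠ 0) : Qm k * Qm' k = 1 := by
  rw [mul_eq_one_comm]
  have hkC : (k : ℂ) ≠ 0 := Nat.cast_ne_zero.mpr hk
  ext m j'
  rw [Matrix.mul_apply]
  simp only [Qm, Qm', Matrix.of_apply]
  have hg : ∀ m : Fin k, (∑ j : Fin k, (if j = 0 then (0:ℂ) else if m = j then 1 else 0))
      = if m = 0 then 0 else 1 := by
    intro m
    by_cases hm : m = 0
    · subst hm
      simp only [if_pos rfl]
      refine Finset.sum_eq_zero fun x _ => ?_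
      by_cases hx : x = 0
      · simp [hx]
      · simp [hx, Ne.symm hx]
    · rw [if_neg hm]
      have : ∀ x : Fin k, (if x = 0 then (0:ℂ) else if m = x then 1 else 0)
          = if m = x then 1 else 0 := by
        intro x
        by_cases hx : x = 0
        · subst hx; simp [hm]
        · simp [hx]
      rw [Finset.sum_congr rfl fun x _ => this x]
      simp
  by_cases h : j' = 0
  · subst h
    simp only [eq_self_iff_true, if_true, mul_one]
    rw [Finset.sum_sub_distrib]
    simp only [Finset.sum_const, Finset.card_univ, Fintype.card_fin, nsmul_eq_mul]
    rw [mul_inv_cancel₀ hkC, hg m]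
    by_cases hm : m = 0
    · simp [hm, Matrix.one_apply]
    · have hm' : (0 : Fin k) ≠ m := fun hc => hm hc.symm
      simp [hm, Matrix.one_apply, hm']
  · simp only [if_neg h]
    have expand : ∀ j : Fin k,
        ((k : ℂ)⁻¹ - (if j = 0 then 0 else if m = j then 1 else 0)) *
          ((if j = 0 then 1 else 0) - (if j = j' then 1 else 0))
        = (k:ℂ)⁻¹ * (if j = 0 then 1 else 0) - (k:ℂ)⁻¹ * (if j = j' then 1 else 0)
          - (if j = 0 then (0:ℂ) else if m = j then 1 else 0) * (if j = 0 then 1 else 0)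
          + (if j = 0 then (0:ℂ) else if m = j then 1 else 0) * (if j = j' then 1 else 0) := by
      intro j; ring
    rw [Finset.sum_congr rfl fun j _ => expand j]
    rw [Finset.sum_add_distrib, Finset.sum_sub_distrib, Finset.sum_sub_distrib]
    have s1 : (∑ j : Fin k, (k:ℂ)⁻¹ * (if j = 0 then 1 else 0)) = (k:ℂ)⁻¹ := by
      simp [← Finset.mul_sum]
    have s2 : (∑ j : Fin k, (k:ℂ)⁻¹ * (if j = j' then 1 else 0)) = (k:ℂ)⁻¹ := by
      simp [← Finset.mul_sum]
    have s3 : (∑ j : Fin k, (if j = 0 then (0:ℂ) else if m = j then 1 else 0) *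
        (if j = 0 then 1 else 0)) = 0 := by
      refine Finset.sum_eq_zero fun x _ => ?_
      by_cases hx : x = 0 <;> simp [hx]
    have s4 : (∑ j : Fin k, (if j = 0 then (0:ℂ) else if m = j then 1 else 0) *
        (if j = j' then 1 else 0)) = if m = j' then 1 else 0 := by
      have : ∀ j : Fin k, (if j = 0 then (0:ℂ) else if m = j then 1 else 0) *
          (if j = j' then 1 else 0) = if j = j' then (if m = j' then 1 else 0) else 0 := by
        intro j
        by_cases hj : j = j'
        · subst hj; simp [h]
        · simp [hj]
      rw [Finset.sum_congr rfl fun j _ => this j]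
      simp
    rw [s1, s2, s3, s4]
    by_cases hm : m = j' <;> simp [hm, Matrix.one_apply, h]


lemma charpoly_diag {m R : Type*} [DecidableEq m] [Fintype m] [CommRing R] (d : m → R) :
    (Matrix.diagonal d).charpoly = ∏ i, (X - C (d i)) := by
  rw [Matrix.charpoly, ← Matrix.det_diagonal (d := fun i => (X : R[X]) - C (d i))]
  congr 1
  ext i j
  by_cases h : i = j
  · subst h
    rw [Matrix.charmatrix_apply_eq, Matrix.diagonal_apply_eq, Matrix.diagonal_apply_eq]
  · rw [Matrix.charmatrix_apply_ne _ _ _ h, Matrix.diagonal_apply_ne _ h,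
      Matrix.diagonal_apply_ne _ h, map_zero, neg_zero]

lemma charpoly_similar {m R : Type*} [DecidableEq m] [Fintype m] [CommRing R]
    (A P P' : Matrix m m R) (h : P * P' = 1) : (P * A * P').charpoly = A.charpoly := by
  have hC : ∀ M N : Matrix m m R, (M * N).map (C : R → R[X]) = M.map C * N.map C := by
    intro M N
    exact Matrix.map_mul (f := (C : R →+* R[X]))
  have hmapC : (P.map (C : R → R[X])) * (P'.map C) = 1 := by
    rw [← hC, h]
    simp [Matrix.map_one]
  have hcm : Matrix.charmatrix (P * A * P') =
      P.map C * Matrix.charmatrix A * P'.map C := by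
    rw [Matrix.charmatrix, Matrix.charmatrix]
    simp only [RingHom.mapMatrix_apply]
    rw [mul_sub, sub_mul]
    congr 1
    · rw [(Matrix.scalar_commute (X : R[X]) (fun r => Commute.all _ _) (P.map C)).symm.eq,
        mul_assoc, hmapC, mul_one]
    · rw [hC, hC]
  have hdet : (P.map (C : R → R[X])).det * (P'.map C).det = 1 := by
    rw [← Matrix.det_mul, hmapC, Matrix.det_one]
  rw [Matrix.charpoly, Matrix.charpoly, hcm, Matrix.det_mul, Matrix.det_mul]
  linear_combination Matrix.det (Matrix.charmatrix A) * hdet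

end AVaux2

open AVaux AVaux2 Matrix Kronecker

/-- The matrix `A_V` (indexed by `(ℤ/nℤ) × {1,…,k}`, with entries `k` between distinct
vertices with the same first index, `[i' = i+1] + [i' = i−1]` between vertices with
distinct first indices, and `0` on the diagonal) has characteristic polynomial
`(X + k)^{n(k−1)} · ∏_{j=0}^{n−1} (X − (k² − k + 2k cos(2πj/n)))`; i.e. its eigenvalues
are `k² + 2k cos(2πj/n) − k` for `j = 0,…,n−1` together with `−k` with multiplicity
`n(k−1)`. -/
theorem AV_charpoly (n k : ℕ) [NeZero n] (hn : 2 ≤ n) (hk : 2 ≤ k)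
    (AV : Matrix (ZMod n × Fin k) (ZMod n × Fin k) ℝ)
    (hAV : ∀ p q : ZMod n × Fin k,
      AV p q =
        if p.1 = q.1 then (if p.2 = q.2 then 0 else (k : ℝ))
        else (if q.1 = p.1 + 1 then 1 else 0) + (if q.1 = p.1 - 1 then 1 else 0)) :
    AV.charpoly =
      (X + C (k : ℝ)) ^ (n * (k - 1)) *
        ∏ j ∈ Finset.range n,
          (X - C ((k : ℝ) ^ 2 - k + 2 * k * Real.cos (2 * Real.pi * j / n))) := by
  classical
  haveI : NeZero k := ⟨by omega⟩
  haveI : Fact (1 < n) := ⟨hn⟩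
  have hone : (1 : ZMod n) ≠ 0 := one_ne_zero
  -- decomposition
  have hdecomp : AV.map (Complex.ofRealHom) =
      (Cm n) ⊗ₖ (Jm k) + (1 : Matrix (ZMod n) (ZMod n) ℂ) ⊗ₖ ((k : ℂ) • (Jm k - 1)) := by
    ext ⟨i, j⟩ ⟨i', j'⟩
    simp only [Matrix.map_apply, hAV, Matrix.add_apply, Matrix.kroneckerMap_apply, Cm, Jm,
      Matrix.of_apply, Matrix.one_apply, Matrix.smul_apply, Matrix.sub_apply, smul_eq_mul]
    by_cases hii : i = i'
    · subst hii
      have e1 : ¬ (i = i + 1) := fun hc => hone (by linear_combination -hc)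
      have e2 : ¬ (i = i - 1) := fun hc => hone (by linear_combination hc)
      by_cases hjj : j = j' <;>
        simp [hjj, e1, e2, Matrix.one_apply]
    · have : ¬ (i = i' ∧ j = j') := fun hc => hii hc.1
      simp only [hii, if_false]
      push_cast
      split_ifs <;> norm_num
  set P := Fm n ⊗ₖ Qm k with hP
  set P' := Fm' n ⊗ₖ Qm' k with hP'
  set d : ZMod n × Fin k → ℂ :=
    fun p => lam n p.1 * em k p.2 + ((k : ℂ) * em k p.2 - k) with hd
  have hPP' : P * P' = 1 := by
    rw [hP, hP', ← Matrix.mul_kronecker_mul, FF'_eq, QQ'_eq (by omega),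
      Matrix.one_kronecker_one]
  have hD : Matrix.diagonal d =
      Matrix.diagonal (lam n) ⊗ₖ Matrix.diagonal (em k) +
        (1 : Matrix (ZMod n) (ZMod n) ℂ) ⊗ₖ
          ((k : ℂ) • Matrix.diagonal (em k) - (k : ℂ) • 1) := by
    ext ⟨a, b⟩ ⟨a', b'⟩
    simp only [Matrix.diagonal_apply, Matrix.add_apply, Matrix.kroneckerMap_apply,
      Matrix.one_apply, Matrix.smul_apply, Matrix.sub_apply, smul_eq_mul, hd, Prod.mk.injEq]
    by_cases ha : a = a' <;> by_cases hb : b = b' <;>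
      simp [ha, hb, Matrix.diagonal_apply, Matrix.one_apply] <;> ring
  have hBQ : ((k : ℂ) • (Jm k - 1)) * Qm k
      = Qm k * ((k : ℂ) • Matrix.diagonal (em k) - (k : ℂ) • 1) := by
    have h0 : (Jm k - 1) * Qm k = Qm k * (Matrix.diagonal (em k) - 1) := by
      rw [sub_mul, one_mul, JQ_eq, mul_sub, Matrix.mul_one]
    rw [smul_mul_assoc, h0, mul_sub, Matrix.mul_one, smul_sub, mul_sub,
      Matrix.mul_smul, Matrix.mul_smul, Matrix.mul_one]
  have hAP : AV.map Complex.ofRealHom * P = P * Matrix.diagonal d := by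
    rw [hdecomp, hD, hP, add_mul, mul_add, ← Matrix.mul_kronecker_mul,
      ← Matrix.mul_kronecker_mul, ← Matrix.mul_kronecker_mul, ← Matrix.mul_kronecker_mul,
      CF_eq, JQ_eq, one_mul, Matrix.mul_one, hBQ]
  have hA : AV.map Complex.ofRealHom = P * Matrix.diagonal d * P' := by
    rw [← hAP, mul_assoc, hPP', Matrix.mul_one]
  have hchar : (AV.map Complex.ofRealHom).charpoly
      = ∏ p : ZMod n × Fin k, (X - C (d p)) := by
    rw [hA, charpoly_similar _ _ _ hPP', charpoly_diag]
  have hprod : (∏ p : ZMod n × Fin k, (X - C (d p)))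
      = (X + C ((k : ℂ))) ^ (n * (k - 1)) * ∏ v ∈ Finset.range n,
          (X - C ((k : ℂ) ^ 2 - k + 2 * k * Complex.cos (2 * Real.pi * v / n))) := by
    rw [Fintype.prod_prod_type]
    have inner : ∀ i : ZMod n, (∏ j : Fin k, (X - C (d (i, j))))
        = (X - C ((k : ℂ) ^ 2 - k
            + 2 * k * Complex.cos (2 * Real.pi * (i.val : ℂ) / n)))
          * (X + C ((k : ℂ))) ^ (k - 1) := by
      intro i
      rw [← Finset.mul_prod_erase Finset.univ _ (Finset.mem_univ (0 : Fin k))]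
      congr 1
      · have h00 : d (i, 0) = (k : ℂ) ^ 2 - k
            + 2 * k * Complex.cos (2 * Real.pi * (i.val : ℂ) / n) := by
          rw [hd]
          simp only [em_zero, lam_eq]
          ring
        rw [h00]
      · have hco : ∀ j ∈ Finset.univ.erase (0 : Fin k),
            (X - C (d (i, j))) = X + C ((k : ℂ)) := by
          intro j hj
          have hj0 : j ≠ 0 := Finset.ne_of_mem_erase hj
          have : d (i, j) = -(k : ℂ) := by
            rw [hd]; simp [em_ne hj0]
          rw [this, map_neg, sub_neg_eq_add]
        rw [Finset.prod_congr rfl hco, Finset.prod_const,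
          Finset.card_erase_of_mem (Finset.mem_univ _), Finset.card_univ, Fintype.card_fin]
    rw [Finset.prod_congr rfl (fun i _ => inner i), Finset.prod_mul_distrib,
      Finset.prod_const, Finset.card_univ, ZMod.card, ← pow_mul]
    rw [zmod_prod (fun v => X - C ((k : ℂ) ^ 2 - k
      + 2 * k * Complex.cos (2 * Real.pi * (v : ℂ) / n)))]
    ring
  apply Polynomial.map_injective (Complex.ofRealHom) Complex.ofReal_injective
  rw [← Matrix.charpoly_map AV Complex.ofRealHom, hchar, hprod]
  simp only [Polynomial.map_mul, Polynomial.map_pow, Polynomial.map_add, Polynomial.map_sub,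
    Polynomial.map_X, Polynomial.map_C, Polynomial.map_prod]
  congr 1
  refine Finset.prod_congr rfl fun v hv => ?_
  congr 1
  rw [Complex.ofRealHom_eq_coe]
  push_cast [Complex.ofReal_cos]
  ring
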